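/- Lemma 6.4 (window of a consecutive composition): Let k ≥ 2, r ≥ 2, n = rk, and fix 1 ≤ i ≤ k−1. Define the k-periodic map T_i on configurations by: T_i(v)_j = v_{j+1} if j ≡ ℓ (mod k) for some 1 ≤ ℓ ≤ i; T_i(v)_j = (v_{j−i} v_{j−i+1} ⋯ v_j) ∩ (v_{j+1} v_{j+2} ⋯ v_{j+k−i}) (the degree-one Grassmann–Cayley meet) if j ≡ i+1 (mod k); and T_i(v)_j = v_j if j ≡ ℓ (mod k) for some i+2 ≤ ℓ ≤ k. Then for every index j ∈ ZMod n there exist a sign ε_j ∈ {+1, −1} and a Laurent monomial M_j in the frozen minors (both independent of v) such that for every generic configuration v, the j-th vector of (σ_i ∘ σ_{i−1} ∘ ⋯ ∘ σ_1)(v) equals ε_j · M_j(v) · T_i(v)_j. -/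

import Mathlib

open scoped BigOperators

noncomputable section

/-- Determinant of the `k × k` matrix whose `b`-th column is `c b`. -/
def colDet {k : ℕ} (c : Fin k → Fin k → ℂ) : ℂ :=
  Matrix.det (Matrix.of fun a b => c b a)

/-- The frozen Plücker minor `Δ_m(v)`, on the `k` cyclically consecutive
columns starting at `m`. -/
def frozen (k n : ℕ) (v : ZMod n → Fin k → ℂ) (m : ZMod n) : ℂ :=
  colDet (fun b : Fin k => v (m + ((b : ℕ) : ZMod n)))

/-- A configuration is generic if all frozen minors are nonzero. -/
def Generic (k n : ℕ) (v : ZMod n → Fin k → ℂ) : Prop :=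
  ∀ m : ZMod n, frozen k n v m ≠ 0

/-- The Laurent monomial `∏_m Δ_m(v)^(e m)` in the frozen minors. -/
def laurent (k n : ℕ) (e : Fin n → ℤ) (v : ZMod n → Fin k → ℂ) : ℂ :=
  ∏ m : Fin n, frozen k n v ((m : ℕ) : ZMod n) ^ e m

/-- The Artin generator `σ_i` acting on configurations. -/
def artin (k n i : ℕ) (v : ZMod n → Fin k → ℂ) : ZMod n → Fin k → ℂ :=
  fun j =>
    if (ZMod.val j) % k = i % k then v (j + 1)
    else if (ZMod.val j) % k = (i + 1) % k then
      (colDet (fun b : Fin k =>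
          if (b : ℕ) = 0 then v (j - 1) else v (j + ((b : ℕ) : ZMod n)))) • v j
        - (frozen k n v j) • v (j - 1)
    else v j

/-- `artinComp k n i v = σ_i (σ_{i-1} (⋯ (σ_1 v)))`. -/
def artinComp (k n : ℕ) : ℕ → (ZMod n → Fin k → ℂ) → ZMod n → Fin k → ℂ
  | 0, v => v
  | m + 1, v => artin k n (m + 1) (artinComp k n m v)

/-- `artinCompRev k n i v = σ_1 (σ_2 (⋯ (σ_i v)))`. -/
def artinCompRev (k n : ℕ) : ℕ → (ZMod n → Fin k → ℂ) → ZMod n → Fin k → ℂ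
  | 0, v => v
  | m + 1, v => artinCompRev k n m (artin k n (m + 1) v)

/-- The degree-one Grassmann–Cayley meet
`(a_1 ⋯ a_p) ∩ (b_1 ⋯ b_q)` (intended for `p + q = k + 1`):
`Σ_{i=1}^{p} (−1)^{p−i} · det(a_1 | ⋯ | â_i | ⋯ | a_p | b_1 | ⋯ | b_q) · a_i`. -/
def gcMeet {k p q : ℕ} (a : Fin p → Fin k → ℂ) (b : Fin q → Fin k → ℂ) : Fin k → ℂ :=
  ∑ i : Fin p, ((-1 : ℂ) ^ (p - 1 - (i : ℕ)) *
    colDet (fun c : Fin k =>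
      if hc : (c : ℕ) < p - 1 then
        (if hci : (c : ℕ) < (i : ℕ) then a ⟨(c : ℕ), Nat.lt_trans hci i.isLt⟩
         else a ⟨(c : ℕ) + 1, by have := i.isLt; omega⟩)
      else if hq : (c : ℕ) - (p - 1) < q then b ⟨(c : ℕ) - (p - 1), hq⟩ else 0)) • a i



/-- The k-periodic map `T_i` of Lemma 6.4 given in window notation
`[v_2, …, v_{i+1}, (v_1 ⋯ v_{i+1}) ∩ (v_{i+2} ⋯ v_{k+1}), v_{i+2}, …, v_k]`. -/
def Tmap (k n i : ℕ) (v : ZMod n → Fin k → ℂ) : ZMod n → Fin k → ℂ :=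
  fun j =>
    if 1 ≤ (ZMod.val j) % k ∧ (ZMod.val j) % k ≤ i then v (j + 1)
    else if (ZMod.val j) % k = (i + 1) % k then
      gcMeet (fun m : Fin (i + 1) => v (j - ((i : ℕ) : ZMod n) + ((m : ℕ) : ZMod n)))
             (fun m : Fin (k - i) => v (j + 1 + ((m : ℕ) : ZMod n)))
    else v j


-- ===================== auxiliary lemmas =====================

section Aux
open Finset

lemma colDet_alt {k : ℕ} (c : Fin k → Fin k → ℂ) :
    colDet c = Matrix.detRowAlternating c := by
  rw [colDet, ← Matrix.det_transpose]; rfl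

lemma colDet_smul_univ {k : ℕ} (s : Fin k → ℂ) (X : Fin k → Fin k → ℂ) :
    colDet (fun b => s b • X b) = (∏ b, s b) * colDet X := by
  rw [colDet_alt, colDet_alt]
  simpa using (Matrix.detRowAlternating : (Fin k → ℂ) [⋀^Fin k]→ₗ[ℂ] ℂ).map_smul_univ s X

lemma colDet_update_smul {k : ℕ} (X : Fin k → Fin k → ℂ) (t : Fin k) (c : ℂ) (x : Fin k → ℂ) :
    colDet (Function.update X t (c • x)) = c * colDet (Function.update X t x) := by
  rw [colDet_alt, colDet_alt]
  simpa using (Matrix.detRowAlternating : (Fin k → ℂ) [⋀^Fin k]→ₗ[ℂ] ℂ).toMultilinearMap.map_update_smul X t c x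

lemma colDet_update_zero {k : ℕ} (X : Fin k → Fin k → ℂ) (t : Fin k) :
    colDet (Function.update X t 0) = 0 := by
  rw [colDet_alt]
  simpa using (Matrix.detRowAlternating : (Fin k → ℂ) [⋀^Fin k]→ₗ[ℂ] ℂ).toMultilinearMap.map_update_zero X t

lemma colDet_update_sum {k : ℕ} {ι : Type*} (s : Finset ι) (X : Fin k → Fin k → ℂ) (t : Fin k)
    (f : ι → Fin k → ℂ) :
    colDet (Function.update X t (∑ m ∈ s, f m)) = ∑ m ∈ s, colDet (Function.update X t (f m)) := by
  classical
  induction s using Finset.induction with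
  | empty =>
      simp only [Finset.sum_empty]
      exact colDet_update_zero X t
  | insert _ _ hm ih =>
      rw [Finset.sum_insert hm, Finset.sum_insert hm, ← ih, colDet_alt, colDet_alt, colDet_alt]
      exact (Matrix.detRowAlternating : (Fin k → ℂ) [⋀^Fin k]→ₗ[ℂ] ℂ).toMultilinearMap.map_update_add X t _ _

lemma colDet_eq_zero_of_eq {k : ℕ} (X : Fin k → Fin k → ℂ) {a b : Fin k}
    (h : X a = X b) (hab : a ≠ b) : colDet X = 0 := by
  rw [colDet_alt]
  exact AlternatingMap.map_eq_zero_of_eq _ X h hab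

lemma colDet_perm {k : ℕ} (X : Fin k → Fin k → ℂ) (σ : Equiv.Perm (Fin k)) :
    colDet (X ∘ σ) = (Equiv.Perm.sign σ : ℤ) * colDet X := by
  rw [colDet_alt, colDet_alt, AlternatingMap.map_perm]
  simp [Units.smul_def, zsmul_eq_mul]

/-- Cramer syzygy: k+1 vectors in ℂ^k satisfy the standard alternating relation. -/
lemma cramer_syzygy {k : ℕ} (u : Fin (k+1) → Fin k → ℂ) :
    ∑ t : Fin (k+1), ((-1 : ℂ) ^ (t : ℕ) * colDet (u ∘ t.succAbove)) • u t = 0 := by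
  funext s
  have happ : (∑ t : Fin (k+1), ((-1 : ℂ) ^ (t : ℕ) * colDet (u ∘ t.succAbove)) • u t) s
      = ∑ t : Fin (k+1), (-1 : ℂ) ^ (t : ℕ) * colDet (u ∘ t.succAbove) * u t s := by
    simp [Finset.sum_apply, mul_assoc]
  rw [happ]
  set N : Matrix (Fin (k+1)) (Fin (k+1)) ℂ :=
    Matrix.of fun a b => Fin.cases (u b s) (fun a' => u b a') a with hN
  have hdet0 : N.det = 0 := by
    apply Matrix.det_zero_of_row_eq (i := 0) (j := s.succ)
    · exact (Fin.succ_ne_zero s).symm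
    · funext b; simp [hN]
  have hexp := Matrix.det_succ_row_zero N
  rw [hdet0] at hexp
  have hsub : ∀ t : Fin (k+1), (N.submatrix Fin.succ t.succAbove).det = colDet (u ∘ t.succAbove) := by
    intro t
    rw [colDet]
    congr 1
  rw [Pi.zero_apply]
  calc (∑ t : Fin (k+1), (-1 : ℂ) ^ (t : ℕ) * colDet (u ∘ t.succAbove) * u t s)
      = ∑ t : Fin (k+1), (-1:ℂ)^(t:ℕ) * N 0 t * (N.submatrix Fin.succ t.succAbove).det := by
        apply Finset.sum_congr rfl
        intro t _
        rw [hsub t]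
        simp [hN]
        ring
    _ = 0 := hexp.symm

lemma laurent_zero (k n : ℕ) (v : ZMod n → Fin k → ℂ) : laurent k n 0 v = 1 := by
  simp [laurent]

lemma laurent_add (k n : ℕ) (e e' : Fin n → ℤ) (v : ZMod n → Fin k → ℂ)
    (hv : Generic k n v) : laurent k n (e + e') v = laurent k n e v * laurent k n e' v := by
  rw [laurent, laurent, laurent, ← Finset.prod_mul_distrib]
  apply Finset.prod_congr rfl
  intro m _
  rw [Pi.add_apply, zpow_add₀ (hv _)]

lemma laurent_single (k n : ℕ) (hn : 0 < n) (t : ZMod n) (z : ℤ) (v : ZMod n → Fin k → ℂ) :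
    laurent k n (Pi.single (⟨ZMod.val t, by haveI : NeZero n := ⟨hn.ne'⟩; exact ZMod.val_lt t⟩ : Fin n) z) v
      = frozen k n v t ^ z := by
  haveI : NeZero n := ⟨hn.ne'⟩
  rw [laurent]
  rw [Finset.prod_eq_single (⟨ZMod.val t, ZMod.val_lt t⟩ : Fin n)]
  · rw [Pi.single_eq_same]
    congr 1
    simpa using ZMod.natCast_rightInverse t
  · intro m _ hm
    rw [Pi.single_eq_of_ne hm, zpow_zero]
  · intro h; exact absurd (Finset.mem_univ _) h

lemma laurent_sum (k n : ℕ) {ι : Type*} (s : Finset ι) (e : ι → Fin n → ℤ)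
    (v : ZMod n → Fin k → ℂ) (hv : Generic k n v) :
    laurent k n (∑ m ∈ s, e m) v = ∏ m ∈ s, laurent k n (e m) v := by
  classical
  induction s using Finset.induction with
  | empty => simp [laurent_zero]
  | insert _ _ hm ih =>
      rw [Finset.sum_insert hm, Finset.prod_insert hm, laurent_add _ _ _ _ _ hv, ih]

lemma prod_sign {ι : Type*} (s : Finset ι) (f : ι → ℂ)
    (h : ∀ m ∈ s, f m = 1 ∨ f m = -1) : (∏ m ∈ s, f m) = 1 ∨ (∏ m ∈ s, f m) = -1 := by
  classical
  induction s using Finset.induction with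
  | empty => simp
  | @insert a s ha ih =>
      rw [Finset.prod_insert ha]
      rcases h a (Finset.mem_insert_self a s) with h1 | h1 <;>
        rcases ih (fun m hm => h m (Finset.mem_insert_of_mem hm)) with h2 | h2 <;>
          simp [h1, h2]

lemma zmod_class (k n : ℕ) (hn : 0 < n) (hkn : k ∣ n) (j : ZMod n) (b : ℕ) :
    ZMod.val (j + (b : ZMod n)) % k = (ZMod.val j + b) % k := by
  haveI : NeZero n := ⟨hn.ne'⟩
  rw [ZMod.val_add, Nat.mod_mod_of_dvd _ hkn, ZMod.val_natCast, Nat.add_mod,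
    Nat.mod_mod_of_dvd _ hkn, ← Nat.add_mod]

lemma mod_pred (k y z : ℕ) (hy : y < k) (hz : z < k) (h : (y+1)%k = (z+1)%k) : y = z := by
  rcases Nat.lt_or_ge (y+1) k with h1|h1
  · rw [Nat.mod_eq_of_lt h1] at h
    rcases Nat.lt_or_ge (z+1) k with h2|h2
    · rw [Nat.mod_eq_of_lt h2] at h; omega
    · have hz1 : z+1 = k := by omega
      rw [hz1, Nat.mod_self] at h; omega
  · have hy1 : y+1 = k := by omega
    rw [hy1, Nat.mod_self] at h
    rcases Nat.lt_or_ge (z+1) k with h2|h2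
    · rw [Nat.mod_eq_of_lt h2] at h; omega
    · omega

lemma sigma_spec (k l : ℕ) (hk : 2 ≤ k) (hl : l ≤ k - 2) :
    ∃ σ : Equiv.Perm (Fin k),
      (Equiv.Perm.sign σ : ℤ) = (-1)^l ∧
      (∀ b : Fin k, (b : ℕ) < k - 1 - l → σ b = b) ∧
      (∀ b : Fin k, k - 1 - l ≤ (b : ℕ) → (b : ℕ) ≤ k - 2 → ((σ b : Fin k) : ℕ) = (b : ℕ) + 1) ∧
      (∀ b : Fin k, (b : ℕ) = k - 1 → ((σ b : Fin k) : ℕ) = k - 1 - l) := by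
  obtain ⟨m, rfl⟩ : ∃ m, k = m + 1 := ⟨k - 1, by omega⟩
  have hlm : l < m + 1 := by omega
  refine ⟨Fin.revPerm.trans ((Fin.cycleRange ⟨l, hlm⟩).symm.trans Fin.revPerm), ?_, ?_, ?_, ?_⟩
  · have h0 : (Fin.revPerm.trans ((Fin.cycleRange (⟨l, hlm⟩ : Fin (m+1))).symm.trans Fin.revPerm))
        = Fin.revPerm * (Fin.cycleRange ⟨l, hlm⟩).symm * Fin.revPerm := rfl
    rw [h0, map_mul, map_mul, Equiv.Perm.sign_symm, Fin.sign_cycleRange]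
    have h2 : ∀ u : ℤˣ, ((u * (-1)^(l:ℕ) * u : ℤˣ) : ℤ) = (((-1:ℤˣ)^(l:ℕ) : ℤˣ) : ℤ) := by
      intro u
      have h3 : u * (-1)^(l:ℕ) * u = (-1)^(l:ℕ) * (u * u) := by
        rw [mul_comm u ((-1)^(l:ℕ)), mul_assoc]
      rw [h3, Int.units_mul_self, mul_one]
    simpa using h2 _
  · intro b hb
    have h1 : Fin.rev b = ⟨m - (b:ℕ), by omega⟩ := by
      apply Fin.ext; rw [Fin.val_rev]; simp
    have h2 : (⟨l, hlm⟩ : Fin (m+1)) < Fin.rev b := by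
      rw [h1, Fin.mk_lt_mk]; omega
    have h3 : (Fin.cycleRange (⟨l, hlm⟩ : Fin (m+1))).symm (Fin.rev b) = Fin.rev b := by
      rw [Equiv.symm_apply_eq, Fin.cycleRange_of_gt h2]
    show Fin.rev ((Fin.cycleRange (⟨l, hlm⟩ : Fin (m+1))).symm (Fin.rev b)) = b
    rw [h3, Fin.rev_rev]
  · intro b hb1 hb2
    have h1 : Fin.rev b = ⟨m - (b:ℕ), by omega⟩ := by
      apply Fin.ext; rw [Fin.val_rev]; simp
    have hc : ((⟨m - (b:ℕ) - 1, by omega⟩ : Fin (m+1))) < (⟨l, hlm⟩ : Fin (m+1)) := by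
      rw [Fin.mk_lt_mk]; omega
    have h3 : (Fin.cycleRange (⟨l, hlm⟩ : Fin (m+1))).symm (Fin.rev b)
        = ⟨m - (b:ℕ) - 1, by omega⟩ := by
      rw [Equiv.symm_apply_eq, Fin.cycleRange_of_lt hc, h1]
      apply Fin.ext
      rw [Fin.val_add_one_of_lt]
      · simp; omega
      · rw [Fin.lt_def]; simp only [Fin.val_last, Fin.val_mk]; omega
    show (Fin.rev ((Fin.cycleRange (⟨l, hlm⟩ : Fin (m+1))).symm (Fin.rev b)) : ℕ) = (b:ℕ) + 1
    rw [h3, Fin.val_rev]; simp; omega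
  · intro b hb
    have h1 : Fin.rev b = (0 : Fin (m+1)) := by
      apply Fin.ext; rw [Fin.val_rev]; simp at hb ⊢; omega
    have h3 : (Fin.cycleRange (⟨l, hlm⟩ : Fin (m+1))).symm (Fin.rev b) = ⟨l, hlm⟩ := by
      rw [Equiv.symm_apply_eq, h1, Fin.cycleRange_self]
    show (Fin.rev ((Fin.cycleRange (⟨l, hlm⟩ : Fin (m+1))).symm (Fin.rev b)) : ℕ) = m + 1 - 1 - l
    rw [h3, Fin.val_rev]; simp

end Aux

section Aux2
open Finset

/-- coefficient determinants appearing in the expansion of a Grassmann-Cayley meet -/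
def gdet (k n p : ℕ) (v : ZMod n → Fin k → ℂ) (j' : ZMod n) (m : ℕ) : ℂ :=
  colDet (fun c : Fin k =>
    if (c : ℕ) < m then v (j' - (p : ZMod n) + ((c : ℕ) : ZMod n))
    else if (c : ℕ) < p then v (j' - (p : ZMod n) + (((c : ℕ) + 1 : ℕ) : ZMod n))
    else v (j' + 1 + (((c : ℕ) - p : ℕ) : ZMod n)))

lemma meet_expand (k n p : ℕ) (hp : p ≤ k - 1) (hk : 1 ≤ k) (v : ZMod n → Fin k → ℂ) (j' : ZMod n) :
    gcMeet (fun m : Fin (p+1) => v (j' - ((p : ℕ) : ZMod n) + ((m : ℕ) : ZMod n)))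
        (fun m : Fin (k-p) => v (j' + 1 + ((m : ℕ) : ZMod n)))
      = ∑ m ∈ Finset.range (p+1),
          ((-1:ℂ)^(p-m) * gdet k n p v j' m) • v (j' - ((p : ℕ) : ZMod n) + ((m : ℕ) : ZMod n)) := by
  rw [gcMeet]
  rw [← Fin.sum_univ_eq_sum_range
    (fun m => ((-1:ℂ)^(p-m) * gdet k n p v j' m) • v (j' - ((p : ℕ) : ZMod n) + ((m : ℕ) : ZMod n)))
    (p+1)]
  apply Finset.sum_congr rfl
  intro i _
  have hval : (p + 1 - 1 - (i : ℕ)) = p - (i : ℕ) := by omega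
  rw [hval]
  congr 2
  rw [gdet]
  congr 1
  funext c
  have hck : (c : ℕ) < k := c.isLt
  split_ifs with h1 h2 h3 h4 h5 <;> first
    | rfl
    | omega

lemma gdet_zero (k n p : ℕ) (hp : p ≤ k) (v : ZMod n → Fin k → ℂ) (j' : ZMod n) :
    gdet k n p v j' 0 = frozen k n v (j' + 1 - (p : ZMod n)) := by
  rw [gdet, frozen]
  congr 1
  funext c
  split_ifs with h1 h2
  · omega
  · congr 1
    push_cast
    ring
  · congr 1
    push_cast [show p ≤ (c:ℕ) by omega]
    ring

lemma gdet_shift (k n l : ℕ) (v : ZMod n → Fin k → ℂ) (j : ZMod n) (m : ℕ) (hm : m ≤ l) :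
    gdet k n (l+1) v j m = gdet k n l v (j-1) m := by
  rw [gdet, gdet]
  congr 1
  funext c
  by_cases hc1 : (c:ℕ) < m
  · rw [if_pos hc1, if_pos hc1]; congr 1; push_cast; ring
  · rw [if_neg hc1, if_neg hc1]
    by_cases hc2 : (c:ℕ) < l
    · rw [if_pos (show (c:ℕ) < l+1 by omega), if_pos hc2]; congr 1; push_cast; ring
    · by_cases hc3 : (c:ℕ) < l+1
      · rw [if_pos hc3, if_neg hc2]
        congr 1
        have hc : (c:ℕ) = l := by omega
        push_cast [hc, Nat.sub_self]
        ring
      · rw [if_neg hc3, if_neg hc2]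
        congr 1
        push_cast [show l+1 ≤ (c:ℕ) by omega, show l ≤ (c:ℕ) by omega]
        ring

lemma gdet_eq_succAbove (k n p : ℕ) (v : ZMod n → Fin k → ℂ) (j : ZMod n) (t : Fin (k+1)) :
    gdet k n p v j (t : ℕ)
      = colDet ((fun t' : Fin (k+1) => v (j - (p : ZMod n) + ((t' : ℕ) : ZMod n))) ∘ t.succAbove) := by
  rw [gdet]
  congr 1
  funext c
  by_cases hct : ((c : ℕ) : ℕ) < (t : ℕ)
  · rw [Function.comp_apply, Fin.succAbove_of_castSucc_lt _ _ (by rw [Fin.lt_def]; simpa using hct)]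
    rw [if_pos hct]
    congr 2
  · rw [Function.comp_apply, Fin.succAbove_of_le_castSucc _ _ (by rw [Fin.le_def]; simpa using hct)]
    rw [if_neg hct]
    have hsucc : ((c.succ : Fin (k+1)) : ℕ) = (c : ℕ) + 1 := rfl
    split_ifs with h2
    · congr 2
    · congr 1
      rw [hsucc]
      push_cast [show p ≤ (c:ℕ) by omega]
      ring

lemma neg_one_pow_sub (l m : ℕ) (h : m ≤ l) : (-1:ℂ)^(l-m) = (-1)^l * (-1)^m := by
  have h1 : (-1:ℂ)^m * (-1)^m = 1 := by rw [← mul_pow]; norm_num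
  calc (-1:ℂ)^(l-m) = (-1)^(l-m) * ((-1)^m * (-1)^m) := by rw [h1, mul_one]
    _ = ((-1)^(l-m) * (-1)^m) * (-1)^m := by ring
    _ = (-1)^l * (-1)^m := by rw [← pow_add, Nat.sub_add_cancel h]

lemma meet_rec (k n l : ℕ) (hk : 2 ≤ k) (hl : l ≤ k - 2) (v : ZMod n → Fin k → ℂ) (j : ZMod n) :
    (∑ m ∈ Finset.range (l+2),
        ((-1:ℂ)^(l+1-m) * gdet k n (l+1) v j m) • v (j - ((l+1 : ℕ) : ZMod n) + ((m : ℕ) : ZMod n)))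
      = gdet k n (l+1) v j (l+1) • v j
        - ∑ m ∈ Finset.range (l+1),
            ((-1:ℂ)^(l-m) * gdet k n l v (j-1) m) • v ((j-1) - ((l : ℕ) : ZMod n) + ((m : ℕ) : ZMod n)) := by
  rw [Finset.sum_range_succ]
  have htop : ((-1:ℂ)^(l+1-(l+1)) * gdet k n (l+1) v j (l+1)) • v (j - ((l+1 : ℕ) : ZMod n) + ((l+1 : ℕ) : ZMod n))
      = gdet k n (l+1) v j (l+1) • v j := by
    have h1 : l+1-(l+1) = 0 := by omega
    rw [h1, pow_zero, one_mul]
    congr 1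
    ring
  rw [htop]
  have hrest : (∑ m ∈ Finset.range (l+1),
      ((-1:ℂ)^(l+1-m) * gdet k n (l+1) v j m) • v (j - ((l+1 : ℕ) : ZMod n) + ((m : ℕ) : ZMod n)))
      = - ∑ m ∈ Finset.range (l+1),
          ((-1:ℂ)^(l-m) * gdet k n l v (j-1) m) • v ((j-1) - ((l : ℕ) : ZMod n) + ((m : ℕ) : ZMod n)) := by
    rw [← Finset.sum_neg_distrib]
    apply Finset.sum_congr rfl
    intro m hm
    have hm' : m ≤ l := by simp at hm; omega
    rw [gdet_shift k n l v j m hm']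
    have hsgn : (-1:ℂ)^(l+1-m) = -((-1:ℂ)^(l-m)) := by
      rw [show l+1-m = (l-m)+1 by omega, pow_succ]
      ring
    rw [hsgn]
    have hidx : j - ((l+1 : ℕ) : ZMod n) + ((m : ℕ) : ZMod n)
        = (j-1) - ((l : ℕ) : ZMod n) + ((m : ℕ) : ZMod n) := by
      push_cast
      ring
    rw [hidx]
    rw [← neg_smul]
    congr 1
    ring
  rw [hrest]
  abel

end Aux2

section Aux3
open Finset

lemma Tmap_shift (k n i : ℕ) (v : ZMod n → Fin k → ℂ) (j : ZMod n)
    (h : 1 ≤ ZMod.val j % k ∧ ZMod.val j % k ≤ i) : Tmap k n i v j = v (j + 1) := by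
  simp only [Tmap]
  rw [if_pos h]

lemma Tmap_meet (k n i : ℕ) (v : ZMod n → Fin k → ℂ) (j : ZMod n)
    (h1 : ¬(1 ≤ ZMod.val j % k ∧ ZMod.val j % k ≤ i)) (h2 : ZMod.val j % k = (i + 1) % k) :
    Tmap k n i v j =
      gcMeet (fun m : Fin (i + 1) => v (j - ((i : ℕ) : ZMod n) + ((m : ℕ) : ZMod n)))
             (fun m : Fin (k - i) => v (j + 1 + ((m : ℕ) : ZMod n))) := by
  simp only [Tmap]
  rw [if_neg h1, if_pos h2]

lemma Tmap_id (k n i : ℕ) (v : ZMod n → Fin k → ℂ) (j : ZMod n)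
    (h1 : ¬(1 ≤ ZMod.val j % k ∧ ZMod.val j % k ≤ i)) (h2 : ZMod.val j % k ≠ (i + 1) % k) :
    Tmap k n i v j = v j := by
  simp only [Tmap]
  rw [if_neg h1, if_neg h2]

lemma artin_shift (k n i : ℕ) (v : ZMod n → Fin k → ℂ) (j : ZMod n)
    (h : ZMod.val j % k = i % k) : artin k n i v j = v (j + 1) := by
  simp only [artin]
  rw [if_pos h]

lemma artin_det (k n i : ℕ) (v : ZMod n → Fin k → ℂ) (j : ZMod n)
    (h1 : ZMod.val j % k ≠ i % k) (h2 : ZMod.val j % k = (i + 1) % k) :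
    artin k n i v j =
      (colDet (fun b : Fin k =>
          if (b : ℕ) = 0 then v (j - 1) else v (j + ((b : ℕ) : ZMod n)))) • v j
        - (frozen k n v j) • v (j - 1) := by
  simp only [artin]
  rw [if_neg h1, if_pos h2]

lemma artin_id (k n i : ℕ) (v : ZMod n → Fin k → ℂ) (j : ZMod n)
    (h1 : ZMod.val j % k ≠ i % k) (h2 : ZMod.val j % k ≠ (i + 1) % k) :
    artin k n i v j = v j := by
  simp only [artin]
  rw [if_neg h1, if_neg h2]

lemma window_det (k n l : ℕ) (hk : 2 ≤ k) (hl : l ≤ k - 2) (v : ZMod n → Fin k → ℂ) (j : ZMod n)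
    (W : Fin k → Fin k → ℂ)
    (hW0 : ∀ b : Fin k, 1 ≤ (b:ℕ) → (b:ℕ) ≤ k-l-2 → W b = v (j + ((b:ℕ) : ZMod n)))
    (hW1 : ∀ b : Fin k, k-l-1 ≤ (b:ℕ) → (b:ℕ) ≤ k-2 → W b = v (j + (((b:ℕ)+1 : ℕ) : ZMod n)))
    (hW2 : W ⟨k-1, by omega⟩ = ∑ m ∈ Finset.range (l+1),
        ((-1:ℂ)^(l-m) * gdet k n l v (j + ((k-1:ℕ) : ZMod n)) m) •
          v ((j + ((k-1:ℕ) : ZMod n)) - ((l:ℕ) : ZMod n) + ((m : ℕ) : ZMod n))) :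
    colDet W = frozen k n v (j + ((k-l : ℕ) : ZMod n)) *
      colDet (fun b : Fin k => if (b:ℕ) = 0 then W ⟨0, by omega⟩ else v (j + ((b:ℕ) : ZMod n))) := by
  obtain ⟨σ, hsgn, hσ1, hσ2, hσ3⟩ := sigma_spec k l hk hl
  set top : Fin k := ⟨k-1, by omega⟩ with htop
  set Tg : Fin k → Fin k → ℂ :=
    (fun b : Fin k => if (b:ℕ) = 0 then W ⟨0, by omega⟩ else v (j + ((b:ℕ) : ZMod n))) with hTg
  have h1 : colDet W = colDet (Function.update W top (∑ m ∈ Finset.range (l+1),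
      ((-1:ℂ)^(l-m) * gdet k n l v (j + ((k-1:ℕ) : ZMod n)) m) •
        v ((j + ((k-1:ℕ) : ZMod n)) - ((l:ℕ) : ZMod n) + ((m : ℕ) : ZMod n)))) := by
    rw [← hW2, Function.update_eq_self]
  rw [h1, colDet_update_sum]
  rw [Finset.sum_eq_single_of_mem 0 (Finset.mem_range.mpr (by omega))]
  · rw [colDet_update_smul, gdet_zero k n l (by omega)]
    have hidx0 : v ((j + ((k-1:ℕ) : ZMod n)) - ((l:ℕ) : ZMod n) + ((0 : ℕ) : ZMod n))
        = v (j + ((k-1-l : ℕ) : ZMod n)) := by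
      congr 1
      push_cast [show 1 ≤ k by omega, show l ≤ k - 1 by omega]
      ring
    have hfz : frozen k n v (j + ((k-1:ℕ) : ZMod n) + 1 - ((l:ℕ) : ZMod n))
        = frozen k n v (j + ((k-l : ℕ) : ZMod n)) := by
      congr 1
      push_cast [show 1 ≤ k by omega, show l ≤ k by omega]
      ring
    rw [hidx0, hfz]
    have hcomp : Function.update W top (v (j + ((k-1-l : ℕ) : ZMod n))) = Tg ∘ σ := by
      funext b
      rcases Nat.lt_or_ge (b : ℕ) (k-1-l) with hb | hb
      · have hσb : σ b = b := hσ1 b hb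
        have hbtop : b ≠ top := by
          intro h
          have := congrArg Fin.val h
          simp only [htop, Fin.val_mk] at this
          omega
        rw [Function.comp_apply, hσb, Function.update_of_ne hbtop]
        simp only [hTg]
        by_cases hb0 : (b : ℕ) = 0
        · have hbz : b = ⟨0, by omega⟩ := by apply Fin.ext; simpa using hb0
          rw [if_pos hb0, hbz]
        · rw [if_neg hb0]
          exact hW0 b (by omega) (by omega)
      · rcases Nat.lt_or_ge (b : ℕ) (k-1) with hb2 | hb2
        · have hσb : ((σ b : Fin k) : ℕ) = (b : ℕ) + 1 := hσ2 b (by omega) (by omega)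
          have hbtop : b ≠ top := by
            intro h
            have := congrArg Fin.val h
            simp only [htop, Fin.val_mk] at this
            omega
          rw [Function.comp_apply, Function.update_of_ne hbtop]
          simp only [hTg]
          rw [if_neg (by rw [hσb]; omega)]
          rw [hW1 b (by omega) (by omega), hσb]
        · have hbv : (b : ℕ) = k - 1 := by have := b.isLt; omega
          have hbeq : b = top := by
            apply Fin.ext
            simp only [htop, Fin.val_mk]
            exact hbv
          have hσb : ((σ b : Fin k) : ℕ) = k - 1 - l := hσ3 b hbv
          rw [Function.comp_apply, hbeq, Function.update_self]
          simp only [hTg]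
          have hσtop : ((σ top : Fin k) : ℕ) = k - 1 - l := by rw [← hbeq]; exact hσb
          rw [if_neg (by rw [hσtop]; omega), hσtop]
    rw [hcomp, colDet_perm, hsgn]
    have hsq : ((-1:ℂ)^l) * ((-1:ℂ)^l) = 1 := by rw [← mul_pow]; norm_num
    push_cast
    simp only [Nat.sub_zero]
    linear_combination (frozen k n v (j + ((k-l : ℕ) : ZMod n)) * colDet Tg) * hsq
  · intro m hm hm0
    have hmr : m ≤ l := by simp only [Finset.mem_range] at hm; omega
    rw [colDet_update_smul]
    have hcol : Function.update W top
        (v ((j + ((k-1:ℕ) : ZMod n)) - ((l:ℕ) : ZMod n) + ((m : ℕ) : ZMod n)))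
        (⟨k-l-2+m, by omega⟩ : Fin k)
        = Function.update W top
        (v ((j + ((k-1:ℕ) : ZMod n)) - ((l:ℕ) : ZMod n) + ((m : ℕ) : ZMod n))) top := by
      have hne : (⟨k-l-2+m, by omega⟩ : Fin k) ≠ top := by
        intro h
        have := congrArg Fin.val h
        simp only [htop, Fin.val_mk] at this
        omega
      rw [Function.update_of_ne hne, Function.update_self]
      rw [hW1 ⟨k-l-2+m, by omega⟩ (by simp only [Fin.val_mk]; omega) (by simp only [Fin.val_mk]; omega)]
      congr 1
      simp only [Fin.val_mk]
      push_cast [show 1 ≤ k by omega, show l + 2 ≤ k by omega, show 2 ≤ k - l by omega, show l ≤ k by omega]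
      ring
    rw [colDet_eq_zero_of_eq _ hcol (by
      intro h
      have := congrArg Fin.val h
      simp only [htop, Fin.val_mk] at this
      omega)]
    ring

lemma F_meet (k n l : ℕ) (hk : 2 ≤ k) (hl : l ≤ k - 2) (v : ZMod n → Fin k → ℂ) (j : ZMod n) :
    colDet (fun b : Fin k => if (b:ℕ) = 0 then
        (∑ m ∈ Finset.range (l+1),
          ((-1:ℂ)^(l-m) * gdet k n l v (j-1) m) •
            v ((j-1) - ((l:ℕ) : ZMod n) + ((m : ℕ) : ZMod n)))
      else v (j + ((b:ℕ) : ZMod n))) =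
    gdet k n (l+1) v j (l+1) * frozen k n v j := by
  set z0 : Fin k := ⟨0, by omega⟩ with hz0
  set P : Fin k → Fin k → ℂ := fun b => v (j + ((b:ℕ) : ZMod n)) with hP
  set u : Fin (k+1) → Fin k → ℂ :=
    fun t => v (j - ((l+1 : ℕ) : ZMod n) + ((t : ℕ) : ZMod n)) with hu
  have hupd : ∀ x : Fin k → ℂ, (fun b : Fin k => if (b:ℕ) = 0 then x else v (j + ((b:ℕ) : ZMod n)))
      = Function.update P z0 x := by
    intro x
    funext b
    rw [Function.update_apply]
    by_cases hb : (b:ℕ) = 0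
    · rw [if_pos hb, if_pos (by apply Fin.ext; simpa [hz0] using hb)]
    · rw [if_neg hb, if_neg (by intro h; rw [h] at hb; simp [hz0] at hb)]
  rw [hupd]
  have hcram := cramer_syzygy u
  have hzero : ∑ t : Fin (k+1), ((-1 : ℂ) ^ (t : ℕ) * colDet (u ∘ t.succAbove)) *
      colDet (Function.update P z0 (u t)) = 0 := by
    have h1 := colDet_update_sum Finset.univ P z0
      (fun t : Fin (k+1) => ((-1 : ℂ) ^ (t : ℕ) * colDet (u ∘ t.succAbove)) • u t)
    rw [hcram, colDet_update_zero] at h1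
    calc ∑ t : Fin (k+1), ((-1 : ℂ) ^ (t : ℕ) * colDet (u ∘ t.succAbove)) *
          colDet (Function.update P z0 (u t))
        = ∑ t : Fin (k+1), colDet (Function.update P z0
            ((((-1 : ℂ) ^ (t : ℕ) * colDet (u ∘ t.succAbove))) • u t)) := by
          apply Finset.sum_congr rfl
          intro t _
          rw [colDet_update_smul]
      _ = 0 := h1.symm
  have hnat : ∑ t ∈ Finset.range (k+1), ((-1 : ℂ) ^ t * gdet k n (l+1) v j t) *
      colDet (Function.update P z0 (v (j - ((l+1 : ℕ) : ZMod n) + ((t : ℕ) : ZMod n)))) = 0 := by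
    rw [← Fin.sum_univ_eq_sum_range (fun t => ((-1 : ℂ) ^ t * gdet k n (l+1) v j t) *
      colDet (Function.update P z0 (v (j - ((l+1 : ℕ) : ZMod n) + ((t : ℕ) : ZMod n))))) (k+1)]
    rw [← hzero]
    apply Finset.sum_congr rfl
    intro t _
    simp only [hu]
    rw [gdet_eq_succAbove k n (l+1) v j t]
  have hvanish : ∀ t ∈ Finset.Ico (l+2) (k+1),
      ((-1 : ℂ) ^ t * gdet k n (l+1) v j t) *
      colDet (Function.update P z0 (v (j - ((l+1 : ℕ) : ZMod n) + ((t : ℕ) : ZMod n)))) = 0 := by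
    intro t ht
    simp only [Finset.mem_Ico] at ht
    have hidx : Function.update P z0 (v (j - ((l+1 : ℕ) : ZMod n) + ((t : ℕ) : ZMod n)))
        (⟨t-l-1, by omega⟩ : Fin k)
        = Function.update P z0 (v (j - ((l+1 : ℕ) : ZMod n) + ((t : ℕ) : ZMod n))) z0 := by
      have hne : (⟨t-l-1, by omega⟩ : Fin k) ≠ z0 := by
        intro h
        have := congrArg Fin.val h
        simp only [hz0, Fin.val_mk] at this
        omega
      rw [Function.update_of_ne hne, Function.update_self, hP]
      simp only [Fin.val_mk]
      congr 1
      push_cast [show 1 ≤ t - l by omega, show l ≤ t by omega]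
      ring
    rw [colDet_eq_zero_of_eq _ hidx (by
      intro h
      have := congrArg Fin.val h
      simp only [hz0, Fin.val_mk] at this
      omega)]
    ring
  have hsplit := Finset.sum_range_add_sum_Ico
    (fun t => ((-1 : ℂ) ^ t * gdet k n (l+1) v j t) *
      colDet (Function.update P z0 (v (j - ((l+1 : ℕ) : ZMod n) + ((t : ℕ) : ZMod n)))))
    (show l+2 ≤ k+1 by omega)
  rw [Finset.sum_eq_zero hvanish, add_zero, hnat] at hsplit
  rw [Finset.sum_range_succ] at hsplit
  have hP0 : v (j - ((l+1 : ℕ) : ZMod n) + ((l+1 : ℕ) : ZMod n)) = P z0 := by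
    rw [hP]
    simp only [hz0, Fin.val_mk]
    congr 1
    push_cast
    ring
  rw [hP0, Function.update_eq_self] at hsplit
  have hPf : colDet P = frozen k n v j := rfl
  rw [hPf] at hsplit
  -- hsplit : Σ_{range (l+1)} g + (-1)^(l+1) * D * Δ = 0
  have hgoal : colDet (Function.update P z0 (∑ m ∈ Finset.range (l+1),
      ((-1:ℂ)^(l-m) * gdet k n l v (j-1) m) •
        v ((j-1) - ((l:ℕ) : ZMod n) + ((m : ℕ) : ZMod n))))
      = (-1:ℂ)^l * ∑ t ∈ Finset.range (l+1), ((-1 : ℂ) ^ t * gdet k n (l+1) v j t) *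
      colDet (Function.update P z0 (v (j - ((l+1 : ℕ) : ZMod n) + ((t : ℕ) : ZMod n)))) := by
    rw [colDet_update_sum, Finset.mul_sum]
    apply Finset.sum_congr rfl
    intro m hm
    have hmr : m ≤ l := by simp only [Finset.mem_range] at hm; omega
    rw [colDet_update_smul, ← gdet_shift k n l v j m hmr, neg_one_pow_sub l m hmr]
    have hidx : v ((j-1) - ((l:ℕ) : ZMod n) + ((m : ℕ) : ZMod n))
        = v (j - ((l+1 : ℕ) : ZMod n) + ((m : ℕ) : ZMod n)) := by
      congr 1
      push_cast
      ring
    rw [hidx]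
    ring
  rw [hgoal]
  have hsum : ∑ t ∈ Finset.range (l+1), ((-1 : ℂ) ^ t * gdet k n (l+1) v j t) *
      colDet (Function.update P z0 (v (j - ((l+1 : ℕ) : ZMod n) + ((t : ℕ) : ZMod n))))
      = -((-1:ℂ) ^ (l+1) * gdet k n (l+1) v j (l+1) * frozen k n v j) := by
    have := hsplit
    linear_combination this
  rw [hsum]
  have hsq : ((-1:ℂ)^l) * ((-1:ℂ)^l) = 1 := by rw [← mul_pow]; norm_num
  rw [pow_succ]
  linear_combination (gdet k n (l+1) v j (l+1) * frozen k n v j) * hsq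

end Aux3

/-- Lemma 6.4 (window of a consecutive composition): the composition
`σ_i ∘ σ_{i−1} ∘ ⋯ ∘ σ_1` agrees componentwise with `T_i`, up to signs and
Laurent monomials in the frozen minors. -/
theorem consecutive_composition_window
    (k r n : ℕ) (hk : 2 ≤ k) (hr : 2 ≤ r) (hn : n = r * k)
    (i : ℕ) (hi1 : 1 ≤ i) (hi2 : i ≤ k - 1) (j : ZMod n) :
    ∃ (ε : ℂ) (e : Fin n → ℤ), (ε = 1 ∨ ε = -1) ∧
      ∀ v : ZMod n → Fin k → ℂ, Generic k n v →
        artinComp k n i v j = (ε * laurent k n e v) • Tmap k n i v j := by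
  have hkn : k ∣ n := ⟨r, by rw [hn, mul_comm]⟩
  have hn2k : 2 * k ≤ n := by rw [hn]; exact Nat.mul_le_mul_right k hr
  have hn0 : 0 < n := by omega
  haveI : NeZero n := ⟨by omega⟩
  have hc1k : ∀ m : ℕ, m < k → m % k = m := fun m hm => Nat.mod_eq_of_lt hm
  clear hi1
  revert hi2 j
  induction i with
  | zero =>
      intro _ j
      by_cases hc : ZMod.val j % k = (0 + 1) % k
      · refine ⟨1, Pi.single (⟨ZMod.val (j+1), ZMod.val_lt _⟩ : Fin n) (-1), Or.inl rfl, ?_⟩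
        intro v hv
        have hT : Tmap k n 0 v j = frozen k n v (j + 1) • v j := by
          rw [Tmap_meet k n 0 v j (by omega) hc]
          rw [meet_expand k n 0 (by omega) (by omega) v j]
          rw [Finset.sum_range_one]
          rw [gdet_zero k n 0 (by omega) v j]
          have ha1 : j + 1 - ((0:ℕ) : ZMod n) = j + 1 := by push_cast; ring
          have ha2 : j - ((0:ℕ):ZMod n) + ((0:ℕ):ZMod n) = j := by push_cast; ring
          rw [ha1, ha2]
          norm_num
        rw [hT]
        show v j = _
        rw [laurent_single k n hn0 (j+1) (-1) v, smul_smul]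
        have hone : (1 : ℂ) * frozen k n v (j+1) ^ (-1 : ℤ) * frozen k n v (j+1) = 1 := by
          rw [one_mul, zpow_neg_one, inv_mul_cancel₀ (hv (j+1))]
        rw [hone, one_smul]
      · refine ⟨1, 0, Or.inl rfl, ?_⟩
        intro v hv
        rw [Tmap_id k n 0 v j (by omega) hc, laurent_zero, mul_one, one_smul]
        rfl
  | succ l ih =>
      intro hl1 j
      have hl : l ≤ k - 2 := by omega
      have hlk : l + 1 < k := by omega
      obtain ⟨ε, e, hsign, hval⟩ :
          ∃ (ε : ZMod n → ℂ) (e : ZMod n → Fin n → ℤ),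
            (∀ t, ε t = 1 ∨ ε t = -1) ∧
            ∀ (t : ZMod n) (v : ZMod n → Fin k → ℂ), Generic k n v →
              artinComp k n l v t = (ε t * laurent k n (e t) v) • Tmap k n l v t := by
        have hih := ih (by omega)
        choose ε e hsg hvl using hih
        exact ⟨ε, e, hsg, fun t v hvv => hvl t v hvv⟩
      by_cases h1 : ZMod.val j % k = (l + 1) % k
      · -- shift slot
        refine ⟨ε (j+1), e (j+1), hsign (j+1), ?_⟩
        intro v hv
        have ha : artinComp k n (l+1) v j = artinComp k n l v (j+1) :=
          artin_shift k n (l+1) _ j h1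
        rw [ha, hval (j+1) v hv]
        have hcj1 : ZMod.val (j+1) % k = (l+2) % k := by
          have e2 := zmod_class k n hn0 hkn j 1
          have e1 : j + ((1:ℕ) : ZMod n) = j + 1 := by push_cast; ring
          rw [e1] at e2
          rw [e2, Nat.add_mod, h1, ← Nat.add_mod]
        have hx : (l+2) % k = l+2 ∨ ((l+2) % k = 0 ∧ l + 2 = k) := by
          rcases Nat.lt_or_ge (l+2) k with h|h
          · exact Or.inl (Nat.mod_eq_of_lt h)
          · have hke : l+2 = k := by omega
            exact Or.inr ⟨by rw [hke, Nat.mod_self], hke⟩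
        have hTl : Tmap k n l v (j+1) = v (j+1) := by
          apply Tmap_id
          · rw [hcj1]
            rcases hx with h|h
            · rw [h]; omega
            · rw [h.1]; omega
          · rw [hcj1, hc1k (l+1) hlk]
            rcases hx with h|h
            · rw [h]; omega
            · rw [h.1]; omega
        have hTl1 : Tmap k n (l+1) v j = v (j+1) := by
          apply Tmap_shift
          rw [h1, hc1k (l+1) hlk]
          omega
        rw [hTl, hTl1]
      by_cases h2 : ZMod.val j % k = (l + 2) % k
      case neg =>
        -- inert slot
        refine ⟨ε j, e j, hsign j, ?_⟩
        intro v hv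
        have ha : artinComp k n (l+1) v j = artinComp k n l v j :=
          artin_id k n (l+1) _ j h1 h2
        rw [ha, hval j v hv]
        have hne1 : ZMod.val j % k ≠ l + 1 := by rw [hc1k (l+1) hlk] at h1; exact h1
        by_cases hm : 1 ≤ ZMod.val j % k ∧ ZMod.val j % k ≤ l
        · rw [Tmap_shift k n l v j hm, Tmap_shift k n (l+1) v j ⟨hm.1, by omega⟩]
        · rw [Tmap_id k n l v j hm h1, Tmap_id k n (l+1) v j (by omega) h2]
      case pos =>
      -- ======== the hard slot : class l+2 ========
      have hz0p : 0 < k := by omega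
      refine ⟨ε (j-1) * ε j * ∏ b ∈ Finset.univ.erase (⟨0, hz0p⟩ : Fin k), ε (j + ((b:ℕ) : ZMod n)),
        e (j-1) + e j + (∑ b ∈ Finset.univ.erase (⟨0, hz0p⟩ : Fin k), e (j + ((b:ℕ) : ZMod n)))
          + Pi.single (⟨ZMod.val (j + ((k-l:ℕ) : ZMod n)), ZMod.val_lt _⟩ : Fin n) 1
          + Pi.single (⟨ZMod.val j, ZMod.val_lt _⟩ : Fin n) 1, ?_, ?_⟩
      · have hP : (∏ b ∈ Finset.univ.erase (⟨0, hz0p⟩ : Fin k), ε (j + ((b:ℕ) : ZMod n))) = 1 ∨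
            (∏ b ∈ Finset.univ.erase (⟨0, hz0p⟩ : Fin k), ε (j + ((b:ℕ) : ZMod n))) = -1 :=
          prod_sign _ _ (fun m _ => hsign _)
        rcases hsign (j-1) with ha|ha <;> rcases hsign j with hb|hb <;>
          rcases hP with hc'|hc' <;> simp [ha, hb, hc']
      intro v hv
      set s : ZMod n → ℂ := fun t => ε t * laurent k n (e t) v with hs
      set w : ZMod n → Fin k → ℂ := artinComp k n l v with hw
      have hwv : ∀ t, w t = s t • Tmap k n l v t := fun t => hval t v hv
      -- class bookkeeping
      have hclsb : ∀ b : ℕ, ZMod.val (j + (b : ZMod n)) % k = (l+2+b) % k := by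
        intro b
        rw [zmod_class k n hn0 hkn j b, Nat.add_mod, h2, ← Nat.add_mod]
      have hclsm : ZMod.val (j-1) % k = l + 1 := by
        have e2 := zmod_class k n hn0 hkn (j-1) 1
        have e1 : (j - 1) + ((1:ℕ) : ZMod n) = j := by push_cast; ring
        rw [e1] at e2
        apply mod_pred k _ _ (Nat.mod_lt _ (by omega)) hlk
        rw [Nat.mod_add_mod, ← e2, h2]
      have hxb : ∀ b : ℕ, b ≤ k-l-2 → ((l+2+b) % k = l+2+b ∨ (l+2+b) % k = 0) := by
        intro b hb
        rcases Nat.lt_or_ge (l+2+b) k with h|h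
        · exact Or.inl (Nat.mod_eq_of_lt h)
        · have hke : l+2+b = k := by omega
          exact Or.inr (by rw [hke, Nat.mod_self])
      have hT0 : ∀ b : ℕ, b ≤ k-l-2 →
          Tmap k n l v (j + (b : ZMod n)) = v (j + (b : ZMod n)) := by
        intro b hb
        apply Tmap_id
        · rw [hclsb b]
          rcases hxb b hb with h|h <;> rw [h] <;> omega
        · rw [hclsb b, hc1k (l+1) hlk]
          rcases hxb b hb with h|h <;> rw [h] <;> omega
      have hT1 : ∀ b : ℕ, k-l-1 ≤ b → b ≤ k-2 →
          Tmap k n l v (j + (b:ZMod n)) = v (j + ((b+1 : ℕ) : ZMod n)) := by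
        intro b hb1 hb2
        have hxx : (l+2+b) % k = l+2+b-k := by
          rw [Nat.mod_eq_sub_mod (by omega), Nat.mod_eq_of_lt (by omega)]
        have hsh := Tmap_shift k n l v (j + (b:ZMod n)) (by rw [hclsb b, hxx]; omega)
        rw [hsh]
        congr 1
        push_cast
        ring
      have hclsk1 : ZMod.val (j + ((k-1:ℕ) : ZMod n)) % k = (l+1) % k := by
        rw [hclsb (k-1)]
        have hre : l+2+(k-1) = (l+1) + k := by omega
        rw [hre, Nat.add_mod_right]
      have hTm : Tmap k n l v (j + ((k-1:ℕ):ZMod n))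
          = ∑ m ∈ Finset.range (l+1),
              ((-1:ℂ)^(l-m) * gdet k n l v (j + ((k-1:ℕ) : ZMod n)) m) •
                v ((j + ((k-1:ℕ) : ZMod n)) - ((l:ℕ) : ZMod n) + ((m : ℕ) : ZMod n)) := by
        rw [Tmap_meet k n l v _ (by rw [hclsk1, hc1k (l+1) hlk]; omega) hclsk1]
        exact meet_expand k n l (by omega) (by omega) v _
      have hTmj : Tmap k n l v (j-1)
          = ∑ m ∈ Finset.range (l+1),
              ((-1:ℂ)^(l-m) * gdet k n l v (j-1) m) •
                v ((j-1) - ((l:ℕ) : ZMod n) + ((m : ℕ) : ZMod n)) := by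
        rw [Tmap_meet k n l v _ (by rw [hclsm]; omega) (by rw [hclsm, hc1k (l+1) hlk])]
        exact meet_expand k n l (by omega) (by omega) v _
      have hTj : Tmap k n l v j = v j := by
        have h0 : j + ((0:ℕ) : ZMod n) = j := by push_cast; ring
        have hTT := hT0 0 (by omega)
        rw [h0] at hTT
        exact hTT
      -- evaluation of the frozen minor of w at j
      have hB : frozen k n w j
          = (s j * ∏ b ∈ Finset.univ.erase (⟨0, hz0p⟩ : Fin k), s (j + ((b:ℕ) : ZMod n)))
            * (frozen k n v (j + ((k-l:ℕ) : ZMod n)) * frozen k n v j) := by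
        have hfwj : frozen k n w j = colDet (fun b : Fin k => w (j + ((b:ℕ) : ZMod n))) := rfl
        have hcols : (fun b : Fin k => w (j + ((b:ℕ) : ZMod n)))
            = fun b : Fin k => s (j + ((b:ℕ):ZMod n)) • Tmap k n l v (j + ((b:ℕ):ZMod n)) := by
          funext b; exact hwv _
        rw [hfwj, hcols, colDet_smul_univ]
        have hH0 : ∀ b : Fin k, 1 ≤ (b:ℕ) → (b:ℕ) ≤ k-l-2 →
            Tmap k n l v (j + ((b:ℕ):ZMod n)) = v (j + ((b:ℕ) : ZMod n)) :=
          fun b hb1 hb2 => hT0 (b:ℕ) hb2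
        have hH1 : ∀ b : Fin k, k-l-1 ≤ (b:ℕ) → (b:ℕ) ≤ k-2 →
            Tmap k n l v (j + ((b:ℕ):ZMod n)) = v (j + (((b:ℕ)+1 : ℕ) : ZMod n)) :=
          fun b hb1 hb2 => hT1 (b:ℕ) hb1 hb2
        rw [window_det k n l hk hl v j
          (fun b : Fin k => Tmap k n l v (j + ((b:ℕ):ZMod n))) hH0 hH1 hTm]
        have hcol2 : (fun b : Fin k => if (b:ℕ) = 0
              then (fun b' : Fin k => Tmap k n l v (j + ((b':ℕ):ZMod n))) ⟨0, by omega⟩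
              else v (j + ((b:ℕ) : ZMod n)))
            = fun b : Fin k => v (j + ((b:ℕ) : ZMod n)) := by
          funext b
          by_cases hb : (b:ℕ) = 0
          · rw [if_pos hb]
            have hred : (fun b' : Fin k => Tmap k n l v (j + ((b':ℕ):ZMod n))) (⟨0, hz0p⟩ : Fin k)
                = Tmap k n l v (j + ((0:ℕ):ZMod n)) := rfl
            rw [hred, hT0 0 (by omega), hb]
          · rw [if_neg hb]
        rw [hcol2]
        have hfr : colDet (fun b : Fin k => v (j + ((b:ℕ) : ZMod n))) = frozen k n v j := rfl
        rw [hfr]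
        have hsp : (∏ b : Fin k, s (j + ((b:ℕ) : ZMod n)))
            = s j * ∏ b ∈ Finset.univ.erase (⟨0, hz0p⟩ : Fin k), s (j + ((b:ℕ) : ZMod n)) := by
          rw [← Finset.mul_prod_erase Finset.univ
            (fun b : Fin k => s (j + ((b:ℕ) : ZMod n))) (Finset.mem_univ (⟨0, hz0p⟩ : Fin k))]
          congr 1
          have hjz : j + (((⟨0, hz0p⟩ : Fin k) : ℕ) : ZMod n) = j := by
            simp only [Fin.val_mk, Nat.cast_zero, add_zero]
          rw [hjz]
        rw [hsp]
      -- evaluation of the modified determinant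
      have hA : colDet (fun b : Fin k => if (b:ℕ) = 0 then w (j-1) else w (j + ((b:ℕ):ZMod n)))
          = (s (j-1) * ∏ b ∈ Finset.univ.erase (⟨0, hz0p⟩ : Fin k), s (j + ((b:ℕ) : ZMod n)))
            * (frozen k n v (j + ((k-l:ℕ) : ZMod n))
                * (gdet k n (l+1) v j (l+1) * frozen k n v j)) := by
        have hcols : (fun b : Fin k => if (b:ℕ) = 0 then w (j-1) else w (j + ((b:ℕ):ZMod n)))
            = fun b : Fin k => (if (b:ℕ) = 0 then s (j-1) else s (j + ((b:ℕ):ZMod n))) •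
                (if (b:ℕ) = 0 then Tmap k n l v (j-1) else Tmap k n l v (j + ((b:ℕ):ZMod n))) := by
          funext b
          by_cases hb : (b:ℕ) = 0
          · rw [if_pos hb, if_pos hb, if_pos hb]; exact hwv _
          · rw [if_neg hb, if_neg hb, if_neg hb]; exact hwv _
        rw [hcols, colDet_smul_univ]
        have hH0 : ∀ b : Fin k, 1 ≤ (b:ℕ) → (b:ℕ) ≤ k-l-2 →
            (if (b:ℕ) = 0 then Tmap k n l v (j-1) else Tmap k n l v (j + ((b:ℕ):ZMod n)))
              = v (j + ((b:ℕ) : ZMod n)) := by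
          intro b hb1 hb2
          rw [if_neg (by omega)]
          exact hT0 (b:ℕ) hb2
        have hH1 : ∀ b : Fin k, k-l-1 ≤ (b:ℕ) → (b:ℕ) ≤ k-2 →
            (if (b:ℕ) = 0 then Tmap k n l v (j-1) else Tmap k n l v (j + ((b:ℕ):ZMod n)))
              = v (j + (((b:ℕ)+1 : ℕ) : ZMod n)) := by
          intro b hb1 hb2
          rw [if_neg (by omega)]
          exact hT1 (b:ℕ) hb1 hb2
        have hH2 : (if ((k-1:ℕ)) = 0 then Tmap k n l v (j-1)
              else Tmap k n l v (j + ((k-1:ℕ):ZMod n)))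
            = ∑ m ∈ Finset.range (l+1),
              ((-1:ℂ)^(l-m) * gdet k n l v (j + ((k-1:ℕ) : ZMod n)) m) •
                v ((j + ((k-1:ℕ) : ZMod n)) - ((l:ℕ) : ZMod n) + ((m : ℕ) : ZMod n)) := by
          rw [if_neg (by omega)]
          exact hTm
        rw [window_det k n l hk hl v j
          (fun b : Fin k => if (b:ℕ) = 0 then Tmap k n l v (j-1)
            else Tmap k n l v (j + ((b:ℕ):ZMod n))) hH0 hH1 hH2]
        have hcol2 : (fun b : Fin k => if (b:ℕ) = 0
              then (fun b' : Fin k => if (b':ℕ) = 0 then Tmap k n l v (j-1)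
                else Tmap k n l v (j + ((b':ℕ):ZMod n))) ⟨0, by omega⟩
              else v (j + ((b:ℕ) : ZMod n)))
            = fun b : Fin k => if (b:ℕ) = 0 then
                (∑ m ∈ Finset.range (l+1),
                  ((-1:ℂ)^(l-m) * gdet k n l v (j-1) m) •
                    v ((j-1) - ((l:ℕ) : ZMod n) + ((m : ℕ) : ZMod n)))
              else v (j + ((b:ℕ) : ZMod n)) := by
          funext b
          by_cases hb : (b:ℕ) = 0
          · rw [if_pos hb, if_pos hb]
            have hred : (fun b' : Fin k => if (b':ℕ) = 0 then Tmap k n l v (j-1)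
                else Tmap k n l v (j + ((b':ℕ):ZMod n))) (⟨0, hz0p⟩ : Fin k)
                = Tmap k n l v (j-1) := rfl
            rw [hred, hTmj]
          · rw [if_neg hb, if_neg hb]
        rw [hcol2, F_meet k n l hk hl v j]
        have hsp : (∏ b : Fin k, if (b:ℕ) = 0 then s (j-1) else s (j + ((b:ℕ) : ZMod n)))
            = s (j-1) * ∏ b ∈ Finset.univ.erase (⟨0, hz0p⟩ : Fin k), s (j + ((b:ℕ) : ZMod n)) := by
          rw [← Finset.mul_prod_erase Finset.univ
            (fun b : Fin k => if (b:ℕ) = 0 then s (j-1) else s (j + ((b:ℕ) : ZMod n)))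
            (Finset.mem_univ (⟨0, hz0p⟩ : Fin k))]
          congr 1
          apply Finset.prod_congr rfl
          intro b hb
          have hbne : (b:ℕ) ≠ 0 := by
            intro hh
            have : b = (⟨0, hz0p⟩ : Fin k) := by apply Fin.ext; simpa using hh
            rw [this] at hb
            exact absurd hb (Finset.notMem_erase _ _)
          rw [if_neg hbne]
        rw [hsp]
      -- the new window entry
      have hcnd : ¬(1 ≤ (l+2)%k ∧ (l+2)%k ≤ l+1) := by
        rcases Nat.lt_or_ge (l+2) k with h|h
        · rw [Nat.mod_eq_of_lt h]; omega
        · have hke : l+2 = k := by omega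
          rw [hke, Nat.mod_self]; omega
      have hTnew : Tmap k n (l+1) v j
          = gdet k n (l+1) v j (l+1) • v j
            - ∑ m ∈ Finset.range (l+1), ((-1:ℂ)^(l-m) * gdet k n l v (j-1) m) •
                v ((j-1) - ((l:ℕ) : ZMod n) + ((m:ℕ) : ZMod n)) := by
        rw [Tmap_meet k n (l+1) v j (by rw [h2]; exact hcnd) h2]
        rw [meet_expand k n (l+1) (by omega) (by omega) v j]
        exact meet_rec k n l hk hl v j
      -- assemble
      have ha0 : artinComp k n (l+1) v j = artin k n (l+1) w j := rfl
      rw [ha0, artin_det k n (l+1) w j h1 h2, hA, hB, hwv j, hTj, hwv (j-1), hTmj, hTnew]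
      have hSC : (ε (j-1) * ε j * ∏ b ∈ Finset.univ.erase (⟨0, hz0p⟩ : Fin k), ε (j + ((b:ℕ) : ZMod n)))
          * laurent k n (e (j-1) + e j
              + (∑ b ∈ Finset.univ.erase (⟨0, hz0p⟩ : Fin k), e (j + ((b:ℕ) : ZMod n)))
              + Pi.single (⟨ZMod.val (j + ((k-l:ℕ) : ZMod n)), ZMod.val_lt _⟩ : Fin n) 1
              + Pi.single (⟨ZMod.val j, ZMod.val_lt _⟩ : Fin n) 1) v
          = s (j-1) * s j * (∏ b ∈ Finset.univ.erase (⟨0, hz0p⟩ : Fin k), s (j + ((b:ℕ) : ZMod n)))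
            * (frozen k n v (j + ((k-l:ℕ) : ZMod n)) * frozen k n v j) := by
        rw [laurent_add k n _ _ v hv, laurent_add k n _ _ v hv, laurent_add k n _ _ v hv,
          laurent_add k n _ _ v hv, laurent_sum k n _ _ v hv,
          laurent_single k n hn0 _ 1 v, laurent_single k n hn0 _ 1 v, zpow_one, zpow_one]
        simp only [hs]
        rw [Finset.prod_mul_distrib]
        ring
      rw [hSC]
      simp only [smul_sub, smul_smul]
      congr 1
      · congr 1
        ring
      · congr 1
        ring

end
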